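/- Let A be a pre-bialgebra over ℂ satisfying the unit axiom, and set t := Σ_{(1)} 1₍₁₎·1₍₂₎ ∈ A. Then t acts as a two-sided unit on the cocentral elements of A: for every τ ∈ A with flip(Δ(τ)) = Δ(τ), one has t·τ = τ and τ·t = τ. -/

import Mathlib

/-!
STATEMENT 5: Let `A` be a pre-bialgebra over `ℂ` satisfying the unit axiom, and set
`t := Σ_{(1)} 1₍₁₎ · 1₍₂₎`.  Then `t` acts as a two-sided unit on the cocentral elements
of `A`: for every `τ ∈ A` with `flip (Δ τ) = Δ τ`, one has `t * τ = τ` and `τ * t = τ`.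
-/

open TensorProduct

set_option maxHeartbeats 1000000
set_option synthInstance.maxHeartbeats 400000

noncomputable section

namespace UnitOnCocentralAux

variable {A : Type*} [Ring A] [Algebra ℂ A] [Coalgebra ℂ A]

/-- `a ⊗ b ↦ ε a • b` -/
def gmap (A : Type*) [Ring A] [Algebra ℂ A] [Coalgebra ℂ A] : A ⊗[ℂ] A →ₗ[ℂ] A :=
  (TensorProduct.lid ℂ A).toLinearMap ∘ₗ (Coalgebra.counit (R := ℂ) (A := A)).rTensor A

/-- `a ⊗ b ↦ ε b • a` -/
def hmap (A : Type*) [Ring A] [Algebra ℂ A] [Coalgebra ℂ A] : A ⊗[ℂ] A →ₗ[ℂ] A :=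
  (TensorProduct.rid ℂ A).toLinearMap ∘ₗ (Coalgebra.counit (R := ℂ) (A := A)).lTensor A

@[simp] lemma gmap_tmul (a b : A) :
    gmap A (a ⊗ₜ[ℂ] b) = Coalgebra.counit (R := ℂ) a • b := by
  simp [gmap]

@[simp] lemma hmap_tmul (a b : A) :
    hmap A (a ⊗ₜ[ℂ] b) = Coalgebra.counit (R := ℂ) b • a := by
  simp [hmap]

lemma gmap_comul (x : A) : gmap A (Coalgebra.comul (R := ℂ) x) = x := by
  simp [gmap, Coalgebra.rTensor_counit_comul]

lemma hmap_comul (x : A) : hmap A (Coalgebra.comul (R := ℂ) x) = x := by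
  simp [hmap, Coalgebra.lTensor_counit_comul]

/-- `a ⊗ (b ⊗ c) ↦ ε b • (a * c)` -/
def Fmap (A : Type*) [Ring A] [Algebra ℂ A] [Coalgebra ℂ A] :
    A ⊗[ℂ] (A ⊗[ℂ] A) →ₗ[ℂ] A :=
  LinearMap.mul' ℂ A ∘ₗ (gmap A).lTensor A

/-- `(a ⊗ b) ⊗ c ↦ ε b • (a * c)` -/
def Gmap (A : Type*) [Ring A] [Algebra ℂ A] [Coalgebra ℂ A] :
    (A ⊗[ℂ] A) ⊗[ℂ] A →ₗ[ℂ] A :=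
  LinearMap.mul' ℂ A ∘ₗ (hmap A).rTensor A

lemma mul'_mul_one_tmul (P : A ⊗[ℂ] A) (τ : A) :
    LinearMap.mul' ℂ A (P * ((1 : A) ⊗ₜ[ℂ] τ)) = LinearMap.mul' ℂ A P * τ := by
  induction P using TensorProduct.induction_on with
  | zero => simp
  | tmul a b => simp [Algebra.TensorProduct.tmul_mul_tmul, mul_assoc]
  | add x y hx hy => simp [add_mul, hx, hy]

lemma mul'_tmul_one_mul (P : A ⊗[ℂ] A) (τ : A) :
    LinearMap.mul' ℂ A ((τ ⊗ₜ[ℂ] (1 : A)) * P) = τ * LinearMap.mul' ℂ A P := by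
  induction P using TensorProduct.induction_on with
  | zero => simp
  | tmul a b => simp [Algebra.TensorProduct.tmul_mul_tmul, mul_assoc]
  | add x y hx hy => simp [mul_add, hx, hy]

lemma lTensor_comul_mul
    (hmul : ∀ x y : A,
      Coalgebra.comul (R := ℂ) (x * y) = Coalgebra.comul x * Coalgebra.comul y)
    (P Q : A ⊗[ℂ] A) :
    (Coalgebra.comul (R := ℂ) (A := A)).lTensor A (P * Q) =
      (Coalgebra.comul (R := ℂ) (A := A)).lTensor A P *
        (Coalgebra.comul (R := ℂ) (A := A)).lTensor A Q := by
  induction P using TensorProduct.induction_on with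
  | zero => simp
  | add x y hx hy => simp [add_mul, hx, hy]
  | tmul a b =>
    induction Q using TensorProduct.induction_on with
    | zero => simp
    | add x y hx hy => simp [mul_add, hx, hy]
    | tmul c d =>
      simp [Algebra.TensorProduct.tmul_mul_tmul, hmul]

lemma rTensor_comul_mul
    (hmul : ∀ x y : A,
      Coalgebra.comul (R := ℂ) (x * y) = Coalgebra.comul x * Coalgebra.comul y)
    (P Q : A ⊗[ℂ] A) :
    (Coalgebra.comul (R := ℂ) (A := A)).rTensor A (P * Q) =
      (Coalgebra.comul (R := ℂ) (A := A)).rTensor A P *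
        (Coalgebra.comul (R := ℂ) (A := A)).rTensor A Q := by
  induction P using TensorProduct.induction_on with
  | zero => simp
  | add x y hx hy => simp [add_mul, hx, hy]
  | tmul a b =>
    induction Q using TensorProduct.induction_on with
    | zero => simp
    | add x y hx hy => simp [mul_add, hx, hy]
    | tmul c d =>
      simp [Algebra.TensorProduct.tmul_mul_tmul, hmul]

lemma Fmap_lTensor_comul (P : A ⊗[ℂ] A) :
    Fmap A ((Coalgebra.comul (R := ℂ) (A := A)).lTensor A P) = LinearMap.mul' ℂ A P := by
  induction P using TensorProduct.induction_on with
  | zero => simp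
  | add x y hx hy => simp [hx, hy]
  | tmul a b => simp [Fmap, gmap_comul]

lemma Gmap_rTensor_comul (P : A ⊗[ℂ] A) :
    Gmap A ((Coalgebra.comul (R := ℂ) (A := A)).rTensor A P) = LinearMap.mul' ℂ A P := by
  induction P using TensorProduct.induction_on with
  | zero => simp
  | add x y hx hy => simp [hx, hy]
  | tmul a b => simp [Gmap, hmap_comul]

lemma keyF (P Q : A ⊗[ℂ] A) :
    Fmap A ((TensorProduct.assoc ℂ A A A) (P ⊗ₜ[ℂ] (1 : A)) * ((1 : A) ⊗ₜ[ℂ] Q)) =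
      hmap A (P * (TensorProduct.comm ℂ A A Q)) := by
  induction P using TensorProduct.induction_on with
  | zero => rw [zero_tmul, map_zero, zero_mul, map_zero, zero_mul, map_zero]
  | add x y hx hy =>
      rw [add_tmul, map_add, add_mul, map_add, hx, hy, add_mul, map_add]
  | tmul a b =>
    induction Q using TensorProduct.induction_on with
    | zero => rw [tmul_zero, mul_zero, map_zero, map_zero, mul_zero, map_zero]
    | add x y hx hy =>
        rw [tmul_add, mul_add, map_add, hx, hy, map_add, mul_add, map_add]
    | tmul c d =>
      simp [Fmap, Algebra.TensorProduct.tmul_mul_tmul, tmul_smul,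
        mul_smul_comm, smul_mul_assoc]

lemma keyG (P Q : A ⊗[ℂ] A) :
    Gmap A ((Q ⊗ₜ[ℂ] (1 : A)) * ((TensorProduct.assoc ℂ A A A).symm ((1 : A) ⊗ₜ[ℂ] P))) =
      gmap A ((TensorProduct.comm ℂ A A Q) * P) := by
  induction P using TensorProduct.induction_on with
  | zero => rw [tmul_zero, map_zero, mul_zero, map_zero, mul_zero, map_zero]
  | add x y hx hy =>
      rw [tmul_add, map_add, mul_add, map_add, hx, hy, mul_add, map_add]
  | tmul a b =>
    induction Q using TensorProduct.induction_on with
    | zero => rw [zero_tmul, zero_mul, map_zero, map_zero, zero_mul, map_zero]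
    | add x y hx hy =>
        rw [add_tmul, add_mul, map_add, hx, hy, map_add, add_mul, map_add]
    | tmul c d =>
      simp [Gmap, Algebra.TensorProduct.tmul_mul_tmul, tmul_smul,
        mul_smul_comm, smul_mul_assoc]

lemma assoc_mul (x y : (A ⊗[ℂ] A) ⊗[ℂ] A) :
    (TensorProduct.assoc ℂ A A A) (x * y) =
      (TensorProduct.assoc ℂ A A A) x * (TensorProduct.assoc ℂ A A A) y :=
  map_mul (Algebra.TensorProduct.assoc ℂ ℂ ℂ A A A) x y

lemma assoc_symm_mul (x y : A ⊗[ℂ] (A ⊗[ℂ] A)) :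
    (TensorProduct.assoc ℂ A A A).symm (x * y) =
      (TensorProduct.assoc ℂ A A A).symm x * (TensorProduct.assoc ℂ A A A).symm y :=
  map_mul (Algebra.TensorProduct.assoc ℂ ℂ ℂ A A A).symm x y

end UnitOnCocentralAux

open UnitOnCocentralAux

theorem unit_on_cocentral_of_unit_axiom
    {A : Type*} [Ring A] [Algebra ℂ A] [FiniteDimensional ℂ A] [Coalgebra ℂ A]
    -- the comultiplication is multiplicative (pre-bialgebra condition):
    (hmul : ∀ x y : A,
      Coalgebra.comul (R := ℂ) (x * y) = Coalgebra.comul x * Coalgebra.comul y)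
    -- the unit axiom `(Δ ⊗ id) (Δ 1) = (1 ⊗ Δ 1) * (Δ 1 ⊗ 1) = (Δ 1 ⊗ 1) * (1 ⊗ Δ 1)`:
    (hunit₁ : (TensorProduct.assoc ℂ A A A)
        (LinearMap.rTensor A (Coalgebra.comul (R := ℂ)) (Coalgebra.comul (1 : A)))
      = ((1 : A) ⊗ₜ[ℂ] Coalgebra.comul (1 : A)) *
          ((TensorProduct.assoc ℂ A A A) (Coalgebra.comul (1 : A) ⊗ₜ[ℂ] (1 : A))))
    (hunit₂ : (TensorProduct.assoc ℂ A A A)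
        (LinearMap.rTensor A (Coalgebra.comul (R := ℂ)) (Coalgebra.comul (1 : A)))
      = ((TensorProduct.assoc ℂ A A A) (Coalgebra.comul (1 : A) ⊗ₜ[ℂ] (1 : A))) *
          ((1 : A) ⊗ₜ[ℂ] Coalgebra.comul (1 : A))) :
    ∀ τ : A, (TensorProduct.comm ℂ A A) (Coalgebra.comul τ) = Coalgebra.comul τ →
      LinearMap.mul' ℂ A (Coalgebra.comul (1 : A)) * τ = τ ∧
      τ * LinearMap.mul' ℂ A (Coalgebra.comul (1 : A)) = τ := by
  intro τ hτ
  have hE : Coalgebra.comul (R := ℂ) (1 : A) * Coalgebra.comul τ = Coalgebra.comul τ := by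
    rw [← hmul, one_mul]
  have hE' : Coalgebra.comul (R := ℂ) τ * Coalgebra.comul (1 : A) = Coalgebra.comul τ := by
    rw [← hmul, mul_one]
  have coas : (TensorProduct.assoc ℂ A A A)
      ((Coalgebra.comul (R := ℂ) (A := A)).rTensor A (Coalgebra.comul (1 : A)))
      = (Coalgebra.comul (R := ℂ) (A := A)).lTensor A (Coalgebra.comul (1 : A)) :=
    Coalgebra.coassoc_apply 1
  constructor
  · -- t * τ = τ
    have way1 :
        Fmap A ((Coalgebra.comul (R := ℂ) (A := A)).lTensor A (Coalgebra.comul (1 : A)) *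
            ((1 : A) ⊗ₜ[ℂ] Coalgebra.comul τ))
          = LinearMap.mul' ℂ A (Coalgebra.comul (1 : A)) * τ := by
      have h1 : ((1 : A) ⊗ₜ[ℂ] Coalgebra.comul (R := ℂ) τ)
          = (Coalgebra.comul (R := ℂ) (A := A)).lTensor A ((1 : A) ⊗ₜ[ℂ] τ) := by
        simp
      rw [h1, ← lTensor_comul_mul hmul, Fmap_lTensor_comul, mul'_mul_one_tmul]
    have way2 :
        Fmap A ((Coalgebra.comul (R := ℂ) (A := A)).lTensor A (Coalgebra.comul (1 : A)) *
            ((1 : A) ⊗ₜ[ℂ] Coalgebra.comul τ))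
          = τ := by
      rw [← coas, hunit₂, mul_assoc]
      have h2 : ((1 : A) ⊗ₜ[ℂ] Coalgebra.comul (R := ℂ) (1 : A)) *
          ((1 : A) ⊗ₜ[ℂ] Coalgebra.comul τ) = (1 : A) ⊗ₜ[ℂ] Coalgebra.comul (R := ℂ) τ := by
        rw [Algebra.TensorProduct.tmul_mul_tmul, one_mul, hE]
      rw [h2, keyF, hτ, hE, hmap_comul]
    rw [← way1, way2]
  · -- τ * t = τ
    have way1 :
        Gmap A ((Coalgebra.comul (R := ℂ) (A := A)).rTensor A
            ((τ ⊗ₜ[ℂ] (1 : A)) * Coalgebra.comul (1 : A)))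
          = τ * LinearMap.mul' ℂ A (Coalgebra.comul (1 : A)) := by
      rw [Gmap_rTensor_comul, mul'_tmul_one_mul]
    have hRT : (Coalgebra.comul (R := ℂ) (A := A)).rTensor A (Coalgebra.comul (1 : A))
        = (Coalgebra.comul (R := ℂ) (1 : A) ⊗ₜ[ℂ] (1 : A)) *
            ((TensorProduct.assoc ℂ A A A).symm
              ((1 : A) ⊗ₜ[ℂ] Coalgebra.comul (1 : A))) := by
      have := congrArg (TensorProduct.assoc ℂ A A A).symm hunit₂
      rw [LinearEquiv.symm_apply_apply, assoc_symm_mul, LinearEquiv.symm_apply_apply] at this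
      exact this
    have way2 :
        Gmap A ((Coalgebra.comul (R := ℂ) (A := A)).rTensor A
            ((τ ⊗ₜ[ℂ] (1 : A)) * Coalgebra.comul (1 : A)))
          = τ := by
      rw [rTensor_comul_mul hmul, LinearMap.rTensor_tmul, hRT, ← mul_assoc]
      have h3 : (Coalgebra.comul (R := ℂ) τ ⊗ₜ[ℂ] (1 : A)) *
          (Coalgebra.comul (R := ℂ) (1 : A) ⊗ₜ[ℂ] (1 : A))
          = Coalgebra.comul (R := ℂ) τ ⊗ₜ[ℂ] (1 : A) := by
        rw [Algebra.TensorProduct.tmul_mul_tmul, mul_one, hE']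
      rw [h3, keyG, hτ, hE', gmap_comul]
    rw [← way1, way2]

end
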